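/- arXiv:1601.07384 — 3 statements merged into one kernel-verified Lean document; each statement's English description precedes it below -/
import Mathlib

section
/- Let p ≥ 1 be a natural number. If P is a real polynomial in three variables X, Y, Z of total degree at most p such that P(j₁/p, j₂/p, j₃/p) = 0 for every triple (j₁, j₂, j₃) of natural numbers with j₁ + j₂ + j₃ ≤ p, then P is the zero polynomial. (Unisolvence of the principal lattice of the reference tetrahedron for polynomials of degree p.) -/
open scoped BigOperators

namespace PLU
open Polynomial

def du (f : ℕ → ℝ) : ℕ → ℝ := fun n => f (n + 1) - f n

noncomputable def dP (q : ℝ[X]) : ℝ[X] := q.comp (X + C 1) - q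

lemma du_eval (q : ℝ[X]) :
    du (fun n : ℕ => q.eval (n : ℝ)) = fun n : ℕ => (dP q).eval (n : ℝ) := by
  funext n
  simp [du, dP, Polynomial.eval_comp, Nat.cast_add]

lemma bin_coeff (i j : ℕ) (h : i ≤ j) : ((X + C 1 : ℝ[X]) ^ i - X ^ i).coeff j = 0 := by
  rw [Polynomial.coeff_sub, Polynomial.C_1, Polynomial.coeff_X_add_one_pow,
    Polynomial.coeff_X_pow]
  rcases eq_or_lt_of_le h with rfl | h
  · simp
  · rw [Nat.choose_eq_zero_of_lt h]
    simp [Nat.ne_of_lt h, (Nat.ne_of_lt h).symm]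

lemma dP_as_sum (m : ℕ) (q : ℝ[X]) (h : q.natDegree ≤ m + 1) :
    dP q = ∑ i ∈ Finset.range (m + 2), C (q.coeff i) * ((X + C 1) ^ i - X ^ i) := by
  have hq : q = ∑ i ∈ Finset.range (m + 2), C (q.coeff i) * X ^ i := by
    simpa [Polynomial.C_mul_X_pow_eq_monomial] using
      q.as_sum_range' (m + 2) (lt_of_le_of_lt h (by omega))
  calc dP q = (∑ i ∈ Finset.range (m + 2), C (q.coeff i) * X ^ i).comp (X + C 1)
      - ∑ i ∈ Finset.range (m + 2), C (q.coeff i) * X ^ i := by rw [dP, ← hq]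
    _ = (∑ i ∈ Finset.range (m + 2), C (q.coeff i) * (X + C 1) ^ i)
      - ∑ i ∈ Finset.range (m + 2), C (q.coeff i) * X ^ i := by
        congr 1
        rw [Polynomial.comp, Polynomial.eval₂_finset_sum]
        refine Finset.sum_congr rfl fun i _ => ?_
        simp [Polynomial.eval₂_mul, Polynomial.eval₂_pow]
    _ = _ := by
        rw [← Finset.sum_sub_distrib]
        exact Finset.sum_congr rfl fun i _ => by ring

lemma bin_natDegree (i : ℕ) : ((X + C 1 : ℝ[X]) ^ i - X ^ i).natDegree ≤ i := by
  rw [Polynomial.natDegree_le_iff_coeff_eq_zero]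
  intro j hj
  exact bin_coeff i j hj.le

lemma dP_deg (m : ℕ) (q : ℝ[X]) (h : q.natDegree ≤ m + 1) : (dP q).natDegree ≤ m := by
  rw [dP_as_sum m q h]
  apply Polynomial.natDegree_sum_le_of_forall_le
  intro i hi
  apply le_trans (Polynomial.natDegree_mul_le)
  rw [Polynomial.natDegree_C, zero_add]
  rw [Polynomial.natDegree_le_iff_coeff_eq_zero]
  intro j hj
  have : i < m + 2 := Finset.mem_range.mp hi
  exact bin_coeff i j (by omega)

lemma dP_coeff (m : ℕ) (q : ℝ[X]) (h : q.natDegree ≤ m + 1) :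
    (dP q).coeff m = (m + 1 : ℝ) * q.coeff (m + 1) := by
  rw [dP_as_sum m q h, Polynomial.finset_sum_coeff]
  rw [Finset.sum_eq_single (m + 1)]
  · rw [Polynomial.coeff_C_mul, Polynomial.coeff_sub, Polynomial.C_1,
      Polynomial.coeff_X_add_one_pow, Polynomial.coeff_X_pow]
    simp [Nat.choose_succ_self_right]
    ring
  · intro i hi hne
    rw [Polynomial.coeff_C_mul]
    rcases lt_or_gt_of_ne hne with h1 | h1
    · -- i < m + 1, so i ≤ m
      rw [bin_coeff i m (by omega), mul_zero]
    · exfalso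
      simp at hi
      omega
  · intro h'
    simp at h'




lemma main_uni : ∀ (m : ℕ) (q : ℝ[X]), q.natDegree ≤ m →
    ∀ n : ℕ, (dP^[m] q).eval (n : ℝ) = (m.factorial : ℝ) * q.coeff m := by
  intro m
  induction m with
  | zero =>
    intro q hq n
    rw [Polynomial.eq_C_of_natDegree_le_zero hq]
    simp
  | succ m ih =>
    intro q hq n
    rw [Function.iterate_succ_apply, ih (dP q) (dP_deg m q hq) n, dP_coeff m q hq,
      Nat.factorial_succ]
    push_cast
    ring

lemma du_iter_eval (q : ℝ[X]) (k : ℕ) :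
    du^[k] (fun n : ℕ => q.eval (n : ℝ)) = fun n : ℕ => (dP^[k] q).eval (n : ℝ) := by
  induction k generalizing q with
  | zero => rfl
  | succ k ih =>
    rw [Function.iterate_succ_apply, du_eval, ih, Function.iterate_succ_apply]

lemma uni_val (p : ℕ) (k mm : ℕ) (h : mm ≤ k) :
    du^[k] (fun n : ℕ => ((n : ℝ) / p) ^ mm) 0 =
      if mm = k then (k.factorial : ℝ) / (p : ℝ) ^ k else 0 := by
  have hfun : (fun n : ℕ => ((n : ℝ) / p) ^ mm) =
      fun n : ℕ => (C (((p : ℝ)⁻¹) ^ mm) * X ^ mm : ℝ[X]).eval (n : ℝ) := by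
    funext n
    simp [div_pow, div_eq_mul_inv, mul_pow]
    ring
  rw [hfun, du_iter_eval]
  show (dP^[k] _).eval ((0:ℕ):ℝ) = _
  rw [main_uni k _ (le_trans (Polynomial.natDegree_C_mul_le _ _) (by simpa using h)) 0]
  rw [Polynomial.coeff_C_mul, Polynomial.coeff_X_pow]
  by_cases hmk : mm = k
  · simp [hmk, div_eq_mul_inv, inv_pow]
  · rw [if_neg hmk, if_neg (fun h' => hmk h'.symm)]; ring


/-- Multivariate partial discrete difference in coordinate `i`. -/
def Dm (i : Fin 3) (f : (Fin 3 → ℕ) → ℝ) : (Fin 3 → ℕ) → ℝ :=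
  fun j => f (Function.update j i (j i + 1)) - f j

def prodf (g : Fin 3 → ℕ → ℝ) : (Fin 3 → ℕ) → ℝ := fun j => ∏ t, g t (j t)

lemma Dm_prodf (i : Fin 3) (g : Fin 3 → ℕ → ℝ) :
    Dm i (prodf g) = prodf (Function.update g i (du (g i))) := by
  funext j
  have h1 : ∀ (b : ℕ → ℝ), (∏ t, Function.update g i b t (j t)) =
      b (j i) * ∏ t ∈ Finset.univ.erase i, g t (j t) := by
    intro b
    rw [← Finset.mul_prod_erase Finset.univ _ (Finset.mem_univ i)]
    rw [Function.update_self]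
    congr 1
    exact Finset.prod_congr rfl fun t ht =>
      by rw [Function.update_of_ne (Finset.ne_of_mem_erase ht)]
  have h2 : ∀ (c : ℕ), (∏ t, g t (Function.update j i c t)) =
      g i c * ∏ t ∈ Finset.univ.erase i, g t (j t) := by
    intro c
    rw [← Finset.mul_prod_erase Finset.univ _ (Finset.mem_univ i)]
    rw [Function.update_self]
    congr 1
    exact Finset.prod_congr rfl fun t ht =>
      by rw [Function.update_of_ne (Finset.ne_of_mem_erase ht)]
  have h3 : (∏ t, g t (j t)) = g i (j i) * ∏ t ∈ Finset.univ.erase i, g t (j t) :=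
    (Finset.mul_prod_erase Finset.univ _ (Finset.mem_univ i)).symm
  simp only [Dm, prodf, h1, h2, h3, du]
  ring

lemma Dm_iter_prodf (i : Fin 3) (k : ℕ) (g : Fin 3 → ℕ → ℝ) :
    (Dm i)^[k] (prodf g) = prodf (Function.update g i (du^[k] (g i))) := by
  induction k generalizing g with
  | zero => simp
  | succ k ih =>
    rw [Function.iterate_succ_apply, Dm_prodf, ih, Function.update_idem,
      Function.update_self, ← Function.iterate_succ_apply]

lemma Dm_sum {α : Type*} (i : Fin 3) (s : Finset α) (f : α → (Fin 3 → ℕ) → ℝ) :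
    Dm i (fun j => ∑ m ∈ s, f m j) = fun j => ∑ m ∈ s, Dm i (f m) j := by
  funext j
  simp [Dm, Finset.sum_sub_distrib]

lemma Dm_iter_sum {α : Type*} (i : Fin 3) (k : ℕ) (s : Finset α)
    (f : α → (Fin 3 → ℕ) → ℝ) :
    (Dm i)^[k] (fun j => ∑ m ∈ s, f m j) = fun j => ∑ m ∈ s, (Dm i)^[k] (f m) j := by
  induction k generalizing f with
  | zero => rfl
  | succ k ih =>
    rw [Function.iterate_succ_apply, Dm_sum, ih]
    funext j
    exact Finset.sum_congr rfl fun m _ => by rw [← Function.iterate_succ_apply]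

lemma Dm_iter_smul (i : Fin 3) (k : ℕ) (c : ℝ) (f : (Fin 3 → ℕ) → ℝ) :
    (Dm i)^[k] (fun j => c * f j) = fun j => c * (Dm i)^[k] f j := by
  induction k generalizing f with
  | zero => rfl
  | succ k ih =>
    rw [Function.iterate_succ_apply, show Dm i (fun j => c * f j)
        = fun j => c * Dm i f j from funext fun j => by simp [Dm]; ring,
      ih, Function.iterate_succ_apply]

lemma sum_update (j : Fin 3 → ℕ) (i : Fin 3) :
    (∑ t, Function.update j i (j i + 1) t) = (∑ t, j t) + 1 := by
  rw [Finset.sum_update_of_mem (Finset.mem_univ i),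
    ← Finset.add_sum_erase Finset.univ j (Finset.mem_univ i), Finset.erase_eq]
  omega

lemma Dm_iter_vanish (i : Fin 3) : ∀ (k : ℕ) (f : (Fin 3 → ℕ) → ℝ) (s : ℕ),
    (∀ j, (∑ t, j t) ≤ s → f j = 0) → ∀ j, (∑ t, j t) + k ≤ s → (Dm i)^[k] f j = 0 := by
  intro k
  induction k with
  | zero => intro f s hf j hj; exact hf j (by omega)
  | succ k ih =>
    intro f s hf j hj
    rcases Nat.exists_eq_add_of_le (show 1 ≤ s by omega) with ⟨s', hs⟩
    rw [Function.iterate_succ_apply]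
    refine ih (Dm i f) s' ?_ j (by omega)
    intro j' hj'
    have h1 := hf (Function.update j' i (j' i + 1)) (by rw [sum_update]; omega)
    have h2 := hf j' (by omega)
    simp [Dm, h1, h2]


lemma key (c : ℝ) (g : Fin 3 → ℕ → ℝ) (kk : Fin 3 → ℕ) :
    (Dm 0)^[kk 0] ((Dm 1)^[kk 1] ((Dm 2)^[kk 2] (fun j => c * prodf g j))) =
      fun j => c * prodf (fun t => du^[kk t] (g t)) j := by
  rw [show (fun j => c * prodf g j) = (fun j => c * (prodf g) j) from rfl,
    Dm_iter_smul, Dm_iter_prodf, Dm_iter_smul, Dm_iter_prodf, Dm_iter_smul, Dm_iter_prodf]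
  funext j
  congr 2
  funext t
  fin_cases t <;>
    simp [Function.update_self, Function.update_of_ne, show (0:Fin 3) ≠ 1 by decide,
      show (0:Fin 3) ≠ 2 by decide, show (1:Fin 3) ≠ 2 by decide]



end PLU

open PLU

/-- Unisolvence of the principal lattice of the reference tetrahedron: a real polynomial
in three variables of total degree at most `p` vanishing at all lattice points
`(j₁/p, j₂/p, j₃/p)` with `j₁+j₂+j₃ ≤ p` is the zero polynomial. -/
theorem principal_lattice_unisolvent (p : ℕ) (hp : 1 ≤ p)
    (P : MvPolynomial (Fin 3) ℝ) (hdeg : P.totalDegree ≤ p)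
    (hzero : ∀ j : Fin 3 → ℕ, (∑ i, j i) ≤ p →
      MvPolynomial.eval (fun i => (j i : ℝ) / p) P = 0) :
    P = 0 := by
  by_contra hP
  have hsupp : P.support.Nonempty := MvPolynomial.support_nonempty.mpr hP
  obtain ⟨k, hk, hksum⟩ := Finset.exists_mem_eq_sup P.support hsupp
    (fun s : Fin 3 →₀ ℕ => s.sum fun _ e => e)
  -- degree sums as finite sums
  have hsum_eq : ∀ m : Fin 3 →₀ ℕ, (m.sum fun _ e => e) = ∑ t, m t := fun m =>
    Finsupp.sum_fintype _ _ (fun _ => rfl)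
  have hktot : (∑ t, k t) = P.totalDegree := by
    rw [MvPolynomial.totalDegree, hksum, hsum_eq]
  have hkp : (∑ t, k t) ≤ p := hktot ▸ hdeg
  have hsum3 : (∑ t, k t) = k 0 + k 1 + k 2 := Fin.sum_univ_three _
  set g : (Fin 3 →₀ ℕ) → Fin 3 → ℕ → ℝ := fun m t n => ((n : ℝ) / p) ^ (m t) with hg
  set F : (Fin 3 → ℕ) → ℝ := fun j => MvPolynomial.eval (fun i => (j i : ℝ) / p) P with hFdef
  have hFeq : F = fun j => ∑ m ∈ P.support, P.coeff m * prodf (g m) j := by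
    funext j
    show MvPolynomial.eval _ P = _
    rw [MvPolynomial.eval_eq']
    rfl
  set G : (Fin 3 → ℕ) → ℝ :=
    (Dm 0)^[k 0] ((Dm 1)^[k 1] ((Dm 2)^[k 2] F)) with hGdef
  -- G vanishes at 0
  have hG0 : G (fun _ => 0) = 0 := by
    have h2 : ∀ j, (∑ t, j t) ≤ p - k 2 → (Dm 2)^[k 2] F j = 0 := by
      intro j hj
      refine Dm_iter_vanish 2 (k 2) F p (fun j' hj' => hzero j' hj') j ?_
      omega
    have h1 : ∀ j, (∑ t, j t) ≤ p - k 2 - k 1 → (Dm 1)^[k 1] ((Dm 2)^[k 2] F) j = 0 := by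
      intro j hj
      refine Dm_iter_vanish 1 (k 1) _ (p - k 2) h2 j ?_
      omega
    refine Dm_iter_vanish 0 (k 0) _ (p - k 2 - k 1) h1 (fun _ => 0) ?_
    simp
    omega
  -- compute G
  have hGeq : G = fun j => ∑ m ∈ P.support,
      P.coeff m * prodf (fun t => du^[k t] (g m t)) j := by
    rw [hGdef, hFeq, Dm_iter_sum, Dm_iter_sum, Dm_iter_sum]
    funext j
    refine Finset.sum_congr rfl fun m _ => ?_
    have := key (P.coeff m) (g m) (fun t => k t)
    exact congrFun this j
  -- evaluate summands at 0
  have hval : ∀ m ∈ P.support, prodf (fun t => du^[k t] (g m t)) (fun _ => 0) =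
      if m = k then ∏ t, ((k t).factorial : ℝ) / (p : ℝ) ^ (k t) else 0 := by
    intro m hm
    have hmle : (∑ t, m t) ≤ ∑ t, k t := by
      rw [hktot, ← hsum_eq]
      exact MvPolynomial.le_totalDegree hm
    by_cases hmk : m = k
    · subst hmk
      rw [if_pos rfl, prodf]
      refine Finset.prod_congr rfl fun t _ => ?_
      rw [hg]
      rw [uni_val p (m t) (m t) le_rfl, if_pos rfl]
    · rw [if_neg hmk]
      have hex : ∃ t, m t < k t := by
        by_contra hc
        push_neg at hc
        have : ∀ t, m t = k t := by
          intro t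
          have h1 := Finset.sum_le_sum (fun t (_ : t ∈ Finset.univ) => hc t)
          by_contra hne
          have : k t < m t := lt_of_le_of_ne (hc t) (Ne.symm hne)
          have := Finset.sum_lt_sum (fun t _ => hc t) ⟨t, Finset.mem_univ t, this⟩
          omega
        exact hmk (Finsupp.ext this)
      obtain ⟨t0, ht0⟩ := hex
      rw [prodf]
      refine Finset.prod_eq_zero (Finset.mem_univ t0) ?_
      rw [hg, uni_val p (k t0) (m t0) ht0.le, if_neg (Nat.ne_of_lt ht0)]
  -- conclude
  have hGv : G (fun _ => 0) = ∑ m ∈ P.support,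
      P.coeff m * prodf (fun t => du^[k t] (g m t)) (fun _ => 0) := congrFun hGeq _
  have : G (fun _ => 0) = P.coeff k * ∏ t, ((k t).factorial : ℝ) / (p : ℝ) ^ (k t) := by
    rw [hGv]
    rw [Finset.sum_eq_single k]
    · rw [hval k hk, if_pos rfl]
    · intro m hm hne
      rw [hval m hm, if_neg hne, mul_zero]
    · intro hk'
      exact absurd hk hk'
  rw [hG0] at this
  have hpne : (p : ℝ) ≠ 0 := Nat.cast_ne_zero.mpr (by omega)
  have hprod : (∏ t, ((k t).factorial : ℝ) / (p : ℝ) ^ (k t)) ≠ 0 := by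
    refine Finset.prod_ne_zero_iff.mpr fun t _ => ?_
    exact div_ne_zero (Nat.cast_ne_zero.mpr (k t).factorial_ne_zero) (pow_ne_zero _ hpne)
  have hck : P.coeff k ≠ 0 := MvPolynomial.mem_support_iff.mp hk
  exact hck (by
    have h := this.symm
    field_simp at h
    exact (mul_eq_zero.mp h).resolve_right hprod)
end

section
/- Let ν > 0, ω > 0, ρ > 0, p̃ ∈ ℝ and R > 0, and let γ ∈ ℂ satisfy γ² = −iω/ν. Suppose f: ℂ → ℂ is twice complex differentiable and satisfies Bessel's equation of order zero in the form f''(z) + f'(z)/z + f(z) = 0 for all z ≠ 0, and suppose f(γR) ≠ 0. Define the complex-valued Womersley profile u(r,t) = (p̃/(iωρ))·(1 − f(γr)/f(γR))·e^{iωt} for r ∈ (0,R] and t ∈ ℝ. Then u satisfies the unsteady axisymmetric Stokes equation driven by the oscillating pressure gradient, ∂u/∂t = ν(∂²u/∂r² + (1/r)·∂u/∂r) + (p̃/ρ)e^{iωt}, for all 0 < r ≤ R and t ∈ ℝ, and it satisfies the no-slip condition u(R,t) = 0 for all t ∈ ℝ. -/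
open Complex

/-- The complex Womersley velocity profile
`u(r,t) = (ptilde/(iωρ))·(1 − f(γr)/f(γR))·e^{iωt}`. -/
noncomputable def womersley (ptilde ω ρ : ℝ) (γ : ℂ) (f : ℂ → ℂ) (R : ℝ) (r t : ℝ) : ℂ :=
  ((ptilde : ℂ) / (Complex.I * (ω : ℂ) * (ρ : ℂ))) * (1 - f (γ * (r : ℂ)) / f (γ * (R : ℂ))) *
    Complex.exp (Complex.I * (ω : ℂ) * (t : ℂ))

private lemma womersley_alg (pt F F' fR E ν ω r γ ρ : ℂ) (hr : r ≠ 0) (hγ : γ ≠ 0)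
    (hfR : fR ≠ 0) (hω : ω ≠ 0) (hρ : ρ ≠ 0)
    (hγ2 : γ * γ * ν = -Complex.I * ω) :
    pt/(Complex.I*ω*ρ) * (1 - F/fR) * (E*(Complex.I*ω)) =
      ν * (pt/(Complex.I*ω*ρ) * -((-(F'/(γ*r)) - F) * γ * γ / fR) * E
        + 1/r * (pt/(Complex.I*ω*ρ) * -(F'*γ/fR) * E)) + pt/ρ * E := by
  have hI : Complex.I ≠ 0 := Complex.I_ne_zero
  field_simp
  linear_combination (-(pt * E * F * r)) * hγ2


/-- The Womersley profile solves the unsteady axisymmetric Stokes equation driven by an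
oscillating pressure gradient, with no-slip at the tube wall `r = R`. -/
theorem womersley_solves_stokes
    (ν ω ρ : ℝ) (hν : 0 < ν) (hω : 0 < ω) (hρ : 0 < ρ) (ptilde : ℝ) (R : ℝ) (hR : 0 < R)
    (γ : ℂ) (hγ : γ ^ 2 = -Complex.I * (ω : ℂ) / (ν : ℂ))
    (f : ℂ → ℂ) (hf : Differentiable ℂ f) (hf' : Differentiable ℂ (deriv f))
    (hbessel : ∀ z : ℂ, z ≠ 0 → deriv (deriv f) z + deriv f z / z + f z = 0)
    (hfR : f (γ * (R : ℂ)) ≠ 0) :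
    (∀ r t : ℝ, 0 < r → r ≤ R →
      deriv (fun t' : ℝ => womersley ptilde ω ρ γ f R r t') t
        = (ν : ℂ) * (deriv (fun r' : ℝ => deriv (fun r'' : ℝ => womersley ptilde ω ρ γ f R r'' t) r') r
            + (1 / (r : ℂ)) * deriv (fun r' : ℝ => womersley ptilde ω ρ γ f R r' t) r)
          + ((ptilde : ℂ) / (ρ : ℂ)) * Complex.exp (Complex.I * (ω : ℂ) * (t : ℂ))) ∧
    (∀ t : ℝ, womersley ptilde ω ρ γ f R R t = 0) := by
  have hω0 : (ω:ℂ) ≠ 0 := by exact_mod_cast hω.ne'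
  have hν0 : (ν:ℂ) ≠ 0 := by exact_mod_cast hν.ne'
  have hρ0 : (ρ:ℂ) ≠ 0 := by exact_mod_cast hρ.ne'
  have hγ0 : γ ≠ 0 := by
    intro h
    rw [h] at hγ
    have : -Complex.I * (ω:ℂ) / (ν:ℂ) = 0 := by rw [← hγ]; ring
    simp [div_eq_zero_iff, hν0, hω0, Complex.I_ne_zero] at this
  have hoR : ∀ s : ℝ, HasDerivAt (fun x:ℝ => (x:ℂ)) 1 s := fun s => Complex.ofRealCLM.hasDerivAt
  constructor
  · intro r t hr hrR
    have hr0 : (r:ℂ) ≠ 0 := by exact_mod_cast hr.ne'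
    have hz0 : γ * (r:ℂ) ≠ 0 := mul_ne_zero hγ0 hr0
    set C : ℂ := (ptilde:ℂ)/(Complex.I*ω*ρ) with hC
    set fR : ℂ := f (γ*(R:ℂ)) with hfRdef
    set E : ℂ := Complex.exp (Complex.I*(ω:ℂ)*(t:ℂ)) with hE
    -- time derivative
    have hEder : HasDerivAt (fun t':ℝ => Complex.exp (Complex.I*(ω:ℂ)*(t':ℂ))) (E * (Complex.I*ω)) t := by
      have := (((hoR t).const_mul (Complex.I*(ω:ℂ)))).cexp
      simpa [hE, mul_comm, mul_assoc] using this
    have hT : HasDerivAt (fun t':ℝ => womersley ptilde ω ρ γ f R r t')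
        (C * (1 - f (γ*(r:ℂ))/fR) * (E * (Complex.I*ω))) t := by
      have := hEder.const_mul (C * (1 - f (γ*(r:ℂ))/fR))
      simpa [womersley, hC, hfRdef, mul_assoc] using this
    rw [hT.deriv]
    -- radial derivatives
    have hgd : ∀ s:ℝ, HasDerivAt (fun x:ℝ => f (γ*(x:ℂ))) (deriv f (γ*(s:ℂ)) * γ) s := by
      intro s
      have hi : HasDerivAt (fun x:ℝ => γ*(x:ℂ)) γ s := by
        simpa using (hoR s).const_mul γ
      exact ((hf (γ*(s:ℂ))).hasDerivAt).comp s hi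
    have hg'd : ∀ s:ℝ, HasDerivAt (fun x:ℝ => deriv f (γ*(x:ℂ))) (deriv (deriv f) (γ*(s:ℂ)) * γ) s := by
      intro s
      have hi : HasDerivAt (fun x:ℝ => γ*(x:ℂ)) γ s := by
        simpa using (hoR s).const_mul γ
      exact ((hf' (γ*(s:ℂ))).hasDerivAt).comp s hi
    have hUr : ∀ s:ℝ, HasDerivAt (fun r':ℝ => womersley ptilde ω ρ γ f R r' t)
        (C * -(deriv f (γ*(s:ℂ)) * γ / fR) * E) s := by
      intro s
      have := ((((hgd s).div_const fR).const_sub 1).const_mul C).mul_const E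
      simpa [womersley, hC, hfRdef, hE] using this
    have hd1 : deriv (fun r':ℝ => womersley ptilde ω ρ γ f R r' t)
        = fun s:ℝ => C * -(deriv f (γ*(s:ℂ)) * γ / fR) * E := by
      funext s; exact (hUr s).deriv
    have hUrr : HasDerivAt (fun s:ℝ => C * -(deriv f (γ*(s:ℂ)) * γ / fR) * E)
        (C * -(deriv (deriv f) (γ*(r:ℂ)) * γ * γ / fR) * E) r := by
      have := (((((hg'd r).mul_const γ).div_const fR).neg.const_mul C)).mul_const E
      simpa [mul_assoc] using this
    rw [hd1, hUrr.deriv]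
    beta_reduce
    -- use Bessel and hγ
    have hb := hbessel (γ*(r:ℂ)) hz0
    have hfpp : deriv (deriv f) (γ*(r:ℂ)) = -(deriv f (γ*(r:ℂ)) / (γ*(r:ℂ))) - f (γ*(r:ℂ)) := by
      linear_combination hb
    have hγ2 : γ * γ = -Complex.I * (ω:ℂ) / (ν:ℂ) := by rw [← hγ]; ring
    rw [hfpp]
    have hγ2' : γ * γ * (ν:ℂ) = -Complex.I * (ω:ℂ) := by
      rw [← sq, hγ]; field_simp
    exact womersley_alg (ptilde:ℂ) (f (γ*(r:ℂ))) (deriv f (γ*(r:ℂ))) fR E (ν:ℂ) (ω:ℂ)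
      (r:ℂ) γ (ρ:ℂ) hr0 hγ0 hfR hω0 hρ0 hγ2'
  · intro t
    simp [womersley, div_self hfR]
end

section
/- Let ν > 0, ω > 0, ρ > 0, p̃ ∈ ℝ, R > 0, let γ ∈ ℂ satisfy γ² = −iω/ν, let f: ℂ → ℂ be twice complex differentiable with f''(z) + f'(z)/z + f(z) = 0 for all z ≠ 0 and f(γR) ≠ 0, and set u(r,t) = (p̃/(iωρ))·(1 − f(γr)/f(γR))·e^{iωt}. Define on the set {(x,y,z) ∈ ℝ³ : 0 < y² + z² ≤ R²} the complex-valued three-dimensional fields V(x,y,z,t) = (u(√(y²+z²), t), 0, 0) and P(x,y,z,t) = −(p̃/ρ)·x·e^{iωt}. Then for all such (x,y,z) and all t ∈ ℝ: (i) the velocity field is divergence-free, ∂V₁/∂x + ∂V₂/∂y + ∂V₃/∂z = 0; and (ii) the unsteady Stokes momentum equations hold componentwise: ∂V₁/∂t + ∂P/∂x = ν(∂²V₁/∂x² + ∂²V₁/∂y² + ∂²V₁/∂z²), while the y- and z-momentum equations reduce to ∂P/∂y = 0 and ∂P/∂z = 0. -/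
open Complex

/-- The axial Womersley velocity as a 3D field: the `x`-component at `(x,y,z,t)`. -/
noncomputable def womersleyV1 (ptilde ω ρ : ℝ) (γ : ℂ) (f : ℂ → ℂ) (R : ℝ)
    (x y z t : ℝ) : ℂ :=
  womersley ptilde ω ρ γ f R (Real.sqrt (y ^ 2 + z ^ 2)) t

/-- The Womersley pressure `P(x,y,z,t) = −(p̃/ρ)·x·e^{iωt}`. -/
noncomputable def womersleyP (ptilde ρ ω : ℝ) (x y z t : ℝ) : ℂ :=
  -((ptilde : ℂ) / (ρ : ℂ)) * (x : ℂ) * Complex.exp (Complex.I * (ω : ℂ) * (t : ℂ))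

lemma sqrt_hasDeriv (b a : ℝ) (h : 0 < a^2 + b^2) :
    HasDerivAt (fun a' : ℝ => Real.sqrt (a'^2 + b^2)) (a / Real.sqrt (a^2+b^2)) a := by
  have h1 : HasDerivAt (fun a' : ℝ => a'^2 + b^2) (2*a) a := by
    simpa [mul_comm] using ((hasDerivAt_pow 2 a).add_const (b^2))
  have h2 := (Real.hasDerivAt_sqrt h.ne').comp a h1
  refine h2.congr_deriv ?_
  ring

lemma comp_hasDeriv (f : ℂ → ℂ) (hf : Differentiable ℂ f) (γ : ℂ) (b a : ℝ) (h : 0 < a^2 + b^2) :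
    HasDerivAt (fun a' : ℝ => f (γ * (Real.sqrt (a'^2+b^2) : ℂ)))
      (γ * ((a / Real.sqrt (a^2+b^2) : ℝ) : ℂ) * deriv f (γ * (Real.sqrt (a^2+b^2) : ℂ))) a := by
  have h2 : HasDerivAt (fun a' : ℝ => ((Real.sqrt (a'^2+b^2) : ℝ) : ℂ))
      ((a / Real.sqrt (a^2+b^2) : ℝ) : ℂ) a := (sqrt_hasDeriv b a h).ofReal_comp
  have h3 := h2.const_mul γ
  have h4 := ((hf (γ * (Real.sqrt (a^2+b^2) : ℂ))).hasDerivAt).scomp a h3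
  simpa [Function.comp_def, smul_eq_mul, mul_assoc] using h4

lemma womer_fst (ptilde ω ρ R t : ℝ) (γ : ℂ) (f : ℂ → ℂ) (hf : Differentiable ℂ f)
    (b a : ℝ) (h : 0 < a^2 + b^2) :
    HasDerivAt (fun a'' : ℝ => womersley ptilde ω ρ γ f R (Real.sqrt (a''^2+b^2)) t)
      (-((ptilde : ℂ) / (Complex.I * ω * ρ) * Complex.exp (Complex.I * ω * t) / f (γ * R)) *
        (γ * ((a / Real.sqrt (a^2+b^2) : ℝ) : ℂ) * deriv f (γ * (Real.sqrt (a^2+b^2) : ℂ)))) a := by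
  set A : ℂ := (ptilde : ℂ) / (Complex.I * ω * ρ)
  set E : ℂ := Complex.exp (Complex.I * ω * t)
  set c : ℂ := -(A * E / f (γ * R))
  have heq : (fun a'' : ℝ => womersley ptilde ω ρ γ f R (Real.sqrt (a''^2+b^2)) t)
      = fun a'' : ℝ => A * E + c * f (γ * (Real.sqrt (a''^2+b^2) : ℂ)) := by
    funext a''
    simp only [womersley, A, E, c]
    ring
  rw [heq]
  simpa using ((comp_hasDeriv f hf γ b a h).const_mul c)

lemma womer_snd (ptilde ω ρ R t : ℝ) (γ : ℂ) (f : ℂ → ℂ)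
    (hf : Differentiable ℂ f) (hf' : Differentiable ℂ (deriv f))
    (b a : ℝ) (h : 0 < a^2 + b^2) :
    deriv (fun a' : ℝ => deriv
        (fun a'' : ℝ => womersley ptilde ω ρ γ f R (Real.sqrt (a''^2+b^2)) t) a') a
      = -((ptilde : ℂ) / (Complex.I * ω * ρ) * Complex.exp (Complex.I * ω * t) / f (γ * R)) *
        (γ * ((b^2 / (Real.sqrt (a^2+b^2))^3 : ℝ) : ℂ) * deriv f (γ * (Real.sqrt (a^2+b^2) : ℂ))
          + γ^2 * ((a^2 / (a^2+b^2) : ℝ) : ℂ) *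
            deriv (deriv f) (γ * (Real.sqrt (a^2+b^2) : ℂ))) := by
  set c : ℂ := -((ptilde : ℂ) / (Complex.I * ω * ρ) * Complex.exp (Complex.I * ω * t) / f (γ * R)) with hc
  have hopen : ∀ᶠ a' in nhds a, 0 < a'^2 + b^2 := by
    have : IsOpen {a' : ℝ | 0 < a'^2 + b^2} :=
      isOpen_lt continuous_const (by fun_prop)
    exact this.mem_nhds h
  have hev : (fun a' : ℝ => deriv
      (fun a'' : ℝ => womersley ptilde ω ρ γ f R (Real.sqrt (a''^2+b^2)) t) a')
      =ᶠ[nhds a] fun a' : ℝ => c * (γ * ((a' / Real.sqrt (a'^2+b^2) : ℝ) : ℂ) *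
          deriv f (γ * (Real.sqrt (a'^2+b^2) : ℂ))) := by
    filter_upwards [hopen] with a' h'
    exact (womer_fst ptilde ω ρ R t γ f hf b a' h').deriv
  rw [hev.deriv_eq]
  have hr2 : (Real.sqrt (a^2+b^2))^2 = a^2+b^2 := Real.sq_sqrt h.le
  have hrpos : 0 < Real.sqrt (a^2+b^2) := Real.sqrt_pos.mpr h
  have hq : HasDerivAt (fun a' : ℝ => a' / Real.sqrt (a'^2+b^2))
      ((1 * Real.sqrt (a^2+b^2) - a * (a / Real.sqrt (a^2+b^2))) / (Real.sqrt (a^2+b^2))^2) a :=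
    (hasDerivAt_id a).div (sqrt_hasDeriv b a h) hrpos.ne'
  have hqC := (hq.ofReal_comp.const_mul γ).mul (comp_hasDeriv (deriv f) hf' γ b a h)
  have hqC2 : HasDerivAt (fun a' : ℝ => c * (γ * ((a' / Real.sqrt (a'^2+b^2) : ℝ) : ℂ) *
      deriv f (γ * (Real.sqrt (a'^2+b^2) : ℂ)))) _ a := hqC.const_mul c
  rw [hqC2.deriv]
  have e1 : (1*Real.sqrt (a^2+b^2) - a*(a/Real.sqrt (a^2+b^2)))/(Real.sqrt (a^2+b^2))^2
      = b^2/(Real.sqrt (a^2+b^2))^3 := by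
    field_simp
    linear_combination hr2
  have e2 : (a/Real.sqrt (a^2+b^2))*(a/Real.sqrt (a^2+b^2)) = a^2/(a^2+b^2) := by
    rw [← hr2]; field_simp; rw [Real.sqrt_sq hrpos.le]
  have e2C : ((a/Real.sqrt (a^2+b^2) : ℝ) : ℂ) * ((a/Real.sqrt (a^2+b^2) : ℝ) : ℂ)
      = ((a^2/(a^2+b^2) : ℝ) : ℂ) := by exact_mod_cast congrArg (Complex.ofReal) e2
  rw [e1]

  linear_combination (c * γ^2 * deriv (deriv f) (γ * (Real.sqrt (a^2+b^2) : ℂ))) * e2C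

/-- The 3D Womersley fields `V = (u(√(y²+z²),t),0,0)` and `P = −(p̃/ρ)x e^{iωt}` are
divergence-free and satisfy the unsteady Stokes momentum equations inside the tube. -/
theorem womersley3d_solves_stokes
    (ν ω ρ : ℝ) (hν : 0 < ν) (hω : 0 < ω) (hρ : 0 < ρ) (ptilde : ℝ) (R : ℝ) (hR : 0 < R)
    (γ : ℂ) (hγ : γ ^ 2 = -Complex.I * (ω : ℂ) / (ν : ℂ))
    (f : ℂ → ℂ) (hf : Differentiable ℂ f) (hf' : Differentiable ℂ (deriv f))
    (hbessel : ∀ w : ℂ, w ≠ 0 → deriv (deriv f) w + deriv f w / w + f w = 0)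
    (hfR : f (γ * (R : ℂ)) ≠ 0)
    (x y z t : ℝ) (hin : 0 < y ^ 2 + z ^ 2) (hout : y ^ 2 + z ^ 2 ≤ R ^ 2) :
    -- (i) divergence-free
    (deriv (fun x' : ℝ => womersleyV1 ptilde ω ρ γ f R x' y z t) x
      + deriv (fun _y' : ℝ => (0 : ℂ)) y
      + deriv (fun _z' : ℝ => (0 : ℂ)) z = 0) ∧
    -- (ii) x-momentum
    (deriv (fun t' : ℝ => womersleyV1 ptilde ω ρ γ f R x y z t') t
      + deriv (fun x' : ℝ => womersleyP ptilde ρ ω x' y z t) x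
      = (ν : ℂ) *
        (deriv (fun x' : ℝ => deriv (fun x'' : ℝ => womersleyV1 ptilde ω ρ γ f R x'' y z t) x') x
        + deriv (fun y' : ℝ => deriv (fun y'' : ℝ => womersleyV1 ptilde ω ρ γ f R x y'' z t) y') y
        + deriv (fun z' : ℝ => deriv (fun z'' : ℝ => womersleyV1 ptilde ω ρ γ f R x y z'' t) z') z)) ∧
    -- y- and z-momentum reduce to the vanishing of the transverse pressure gradient
    (deriv (fun y' : ℝ => womersleyP ptilde ρ ω x y' z t) y = 0) ∧
    (deriv (fun z' : ℝ => womersleyP ptilde ρ ω x y z' t) z = 0) := by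
  refine ⟨by simp [womersleyV1], ?_, by simp [womersleyP], by simp [womersleyP]⟩
  have hI : Complex.I ≠ 0 := Complex.I_ne_zero
  have hωC : ((ω:ℂ)) ≠ 0 := by exact_mod_cast hω.ne'
  have hρC : ((ρ:ℂ)) ≠ 0 := by exact_mod_cast hρ.ne'
  have hνC : ((ν:ℂ)) ≠ 0 := by exact_mod_cast hν.ne'
  have hγ0 : γ ≠ 0 := by
    have h2 : γ^2 ≠ 0 := by
      rw [hγ]; exact div_ne_zero (mul_ne_zero (neg_ne_zero.mpr hI) hωC) hνC
    exact fun h => h2 (by simp [h])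
  have hr0 : 0 < Real.sqrt (y^2+z^2) := Real.sqrt_pos.mpr hin
  have hrC : ((Real.sqrt (y^2+z^2) : ℝ) : ℂ) ≠ 0 := by exact_mod_cast hr0.ne'
  have hw0 : γ * ((Real.sqrt (y^2+z^2) : ℝ) : ℂ) ≠ 0 := mul_ne_zero hγ0 hrC
  have hr2C : (((Real.sqrt (y^2+z^2) : ℝ) : ℂ))^2 = (y:ℂ)^2 + (z:ℂ)^2 := by
    exact_mod_cast congrArg Complex.ofReal (Real.sq_sqrt hin.le)
  -- time derivative
  have ht : deriv (fun t' : ℝ => womersleyV1 ptilde ω ρ γ f R x y z t') t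
      = ((ptilde:ℂ)/(Complex.I*ω*ρ)) * (1 - f (γ * ((Real.sqrt (y^2+z^2) : ℝ):ℂ)) / f (γ*R))
        * (Complex.exp (Complex.I*ω*t) * (Complex.I*ω)) := by
    simp only [womersleyV1, womersley]
    have h1 : HasDerivAt (fun t' : ℝ => Complex.I*(ω:ℂ)*(t':ℂ)) (Complex.I*ω) t := by
      simpa using ((hasDerivAt_id t).ofReal_comp.const_mul (Complex.I*(ω:ℂ)))
    exact ((h1.cexp).const_mul _).deriv
  -- pressure x-derivative
  have hxP : deriv (fun x' : ℝ => womersleyP ptilde ρ ω x' y z t) x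
      = -((ptilde:ℂ)/(ρ:ℂ)) * Complex.exp (Complex.I*ω*t) := by
    simp only [womersleyP]
    have h1 : HasDerivAt (fun x' : ℝ => -((ptilde:ℂ)/(ρ:ℂ)) * (x':ℂ)) (-((ptilde:ℂ)/(ρ:ℂ))) x := by
      simpa using ((hasDerivAt_id x).ofReal_comp.const_mul (-((ptilde:ℂ)/(ρ:ℂ))))
    simpa using (h1.mul_const (Complex.exp (Complex.I*ω*t))).deriv
  have hxx : deriv (fun x' : ℝ => deriv
      (fun x'' : ℝ => womersleyV1 ptilde ω ρ γ f R x'' y z t) x') x = 0 := by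
    simp [womersleyV1]
  have hyy := womer_snd ptilde ω ρ R t γ f hf hf' z y hin
  have hzz := womer_snd ptilde ω ρ R t γ f hf hf' y z (by rw [add_comm]; exact hin)
  rw [show (z:ℝ)^2 + y^2 = y^2 + z^2 from add_comm _ _] at hzz
  have hswap : (fun z'' : ℝ => womersley ptilde ω ρ γ f R (Real.sqrt (y^2+z''^2)) t)
      = fun z'' : ℝ => womersley ptilde ω ρ γ f R (Real.sqrt (z''^2+y^2)) t := by
    funext z''; rw [add_comm]
  simp only [womersleyV1] at ht hxx ⊢
  rw [ht, hxP, hxx, hyy, hswap, hzz]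
  have hb := hbessel _ hw0
  have hr2R : (Real.sqrt (y^2+z^2))^2 = y^2+z^2 := Real.sq_sqrt hin.le
  have c1 : ((z^2/(Real.sqrt (y^2+z^2))^3 : ℝ):ℂ) + ((y^2/(Real.sqrt (y^2+z^2))^3 : ℝ):ℂ)
      = 1/((Real.sqrt (y^2+z^2) : ℝ):ℂ) := by
    have hreal : z^2/(Real.sqrt (y^2+z^2))^3 + y^2/(Real.sqrt (y^2+z^2))^3
        = 1/(Real.sqrt (y^2+z^2)) := by
      field_simp
      linear_combination (-1:ℝ)*hr2R
    exact_mod_cast congrArg Complex.ofReal hreal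
  have c2 : ((y^2/(y^2+z^2) : ℝ):ℂ) + ((z^2/(y^2+z^2) : ℝ):ℂ) = 1 := by
    have hreal : y^2/(y^2+z^2) + z^2/(y^2+z^2) = 1 := by field_simp
    exact_mod_cast congrArg Complex.ofReal hreal
  set c : ℂ := (ptilde:ℂ)/(Complex.I*ω*ρ) * Complex.exp (Complex.I*ω*t) / f (γ*R) with hcdef
  set F' : ℂ := deriv f (γ * ((Real.sqrt (y^2+z^2) : ℝ):ℂ)) with hF'
  set F'' : ℂ := deriv (deriv f) (γ * ((Real.sqrt (y^2+z^2) : ℝ):ℂ)) with hF''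
  set fw : ℂ := f (γ * ((Real.sqrt (y^2+z^2) : ℝ):ℂ)) with hfw
  rw [zero_add]
  have hS : -c * (γ * ((z^2/(Real.sqrt (y^2+z^2))^3 : ℝ):ℂ) * F'
        + γ^2 * ((y^2/(y^2+z^2) : ℝ):ℂ) * F'')
      + -c * (γ * ((y^2/(Real.sqrt (y^2+z^2))^3 : ℝ):ℂ) * F'
        + γ^2 * ((z^2/(y^2+z^2) : ℝ):ℂ) * F'')
      = c * γ^2 * fw := by
    have hb2 : F'' * (γ * ((Real.sqrt (y^2+z^2) : ℝ):ℂ)) + F'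
        + fw * (γ * ((Real.sqrt (y^2+z^2) : ℝ):ℂ)) = 0 := by
      have h := congrArg (fun u => u * (γ * ((Real.sqrt (y^2+z^2) : ℝ):ℂ))) hb
      simpa [add_mul, div_mul_cancel₀, hw0] using h
    have h4 : (1/((Real.sqrt (y^2+z^2) : ℝ):ℂ)) * ((Real.sqrt (y^2+z^2) : ℝ):ℂ) = 1 :=
      one_div_mul_cancel hrC
    have h3 : (-(c*γ*F'*(1/((Real.sqrt (y^2+z^2) : ℝ):ℂ))) - c*γ^2*F'')
          * ((Real.sqrt (y^2+z^2) : ℝ):ℂ)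
        = (c * γ^2 * fw) * ((Real.sqrt (y^2+z^2) : ℝ):ℂ) := by
      linear_combination (-(c*γ*F'))*h4 + (-(c*γ))*hb2
    calc -c * (γ * ((z^2/(Real.sqrt (y^2+z^2))^3 : ℝ):ℂ) * F'
            + γ^2 * ((y^2/(y^2+z^2) : ℝ):ℂ) * F'')
          + -c * (γ * ((y^2/(Real.sqrt (y^2+z^2))^3 : ℝ):ℂ) * F'
            + γ^2 * ((z^2/(y^2+z^2) : ℝ):ℂ) * F'')
        = -(c*γ*F'*(((z^2/(Real.sqrt (y^2+z^2))^3 : ℝ):ℂ) + ((y^2/(Real.sqrt (y^2+z^2))^3 : ℝ):ℂ)))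
          - c*γ^2*F''*(((y^2/(y^2+z^2) : ℝ):ℂ) + ((z^2/(y^2+z^2) : ℝ):ℂ)) := by ring
      _ = -(c*γ*F'*(1/((Real.sqrt (y^2+z^2) : ℝ):ℂ))) - c*γ^2*F'' := by rw [c1, c2]; ring
      _ = c * γ^2 * fw := mul_right_cancel₀ hrC h3
  rw [hS]
  have hνγ : (ν:ℂ) * γ^2 = -(Complex.I*ω) := by
    rw [hγ]
    field_simp
  have hfin : (ν:ℂ) * (c*γ^2*fw) = -(Complex.I*ω) * (c*fw) := by
    rw [show (ν:ℂ)*(c*γ^2*fw) = (↑ν*γ^2)*(c*fw) from by ring, hνγ]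
  rw [hfin, hcdef]
  field_simp
  ring_nf
end
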